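/- Let A be a finite-dimensional vector space over a field k of characteristic 0 with linear maps α, β : A → A⊗A. Define bilinear operations ◁', ▷' on the dual space A* by ⟨f◁'g, a⟩ = (f⊗g)(α(a)) and ⟨f▷'g, a⟩ = (f⊗g)(β(a)) for f,g ∈ A*, a ∈ A, where (f⊗g)(u⊗v) := f(u)g(v). Then (A,α,β) is a pre-Novikov coalgebra if and only if (A*, ◁', ▷') is a pre-Novikov algebra. -/

import Mathlib

open TensorProduct

noncomputable section

variable {k : Type*} [Field k]
section AlgDefs
variable {A : Type*} [AddCommGroup A] [Module k A]

/-- A pre-Lie algebra structure: `(a∘b)∘c − a∘(b∘c) = (b∘a)∘c − b∘(a∘c)`. -/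
def IsPreLie (op : A →ₗ[k] A →ₗ[k] A) : Prop :=
  ∀ a b c : A, op (op a b) c - op a (op b c) = op (op b a) c - op b (op a c)

/-- A Novikov algebra: a pre-Lie algebra with `(a∘b)∘c = (a∘c)∘b`. -/
def IsNovikov (op : A →ₗ[k] A →ₗ[k] A) : Prop :=
  IsPreLie op ∧ ∀ a b c : A, op (op a b) c = op (op a c) b

/-- A pre-Novikov algebra with operations `l = ◁` and `r = ▷`,
writing `a∘b := a◁b + a▷b`. -/
def IsPreNovikov (l r : A →ₗ[k] A →ₗ[k] A) : Prop :=
  (∀ a b c : A, r a (r b c) = r (l a b + r a b) c + r b (r a c) - r (l b a + r b a) c) ∧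
  (∀ a b c : A, r a (l b c) = l (r a b) c + l b (l a c + r a c) - l (l b a) c) ∧
  (∀ a b c : A, r (l a b + r a b) c = l (r a c) b) ∧
  (∀ a b c : A, l (l a b) c = l (l a c) b)

/-- A right Novikov algebra. -/
def IsRightNovikov (d : A →ₗ[k] A →ₗ[k] A) : Prop :=
  (∀ x y z : A, d (d x y) z - d x (d y z) = d (d x z) y - d x (d z y)) ∧
  (∀ x y z : A, d x (d y z) = d y (d x z))

/-- A right Novikov dialgebra with operations `dl = ⊣` and `dr = ⊢`. -/
def IsRightNovikovDialgebra (dl dr : A →ₗ[k] A →ₗ[k] A) : Prop :=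
  (∀ x y z : A, dr x (dr y z) = dr y (dr x z)) ∧
  (∀ x y z : A, dr x (dl y z) = dl y (dl x z)) ∧
  (∀ x y z : A, dr (dr x y - dl x y) z = 0) ∧
  (∀ x y z : A, dl x (dr y z - dl y z) = 0) ∧
  (∀ x y z : A, dr x (dr y z - dl z y) = dr (dr x y) z - dl (dr x z) y) ∧
  (∀ x y z : A, dl x (dr y z - dl z y) = dl (dl x y) z - dl (dl x z) y)

/-- A quadratic right Novikov algebra: a right Novikov algebra with a symmetric
nondegenerate bilinear form satisfying `(x⋄y,z) = −(x, y⋄z + z⋄y)`. -/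
def IsQuadraticRightNovikov (d : A →ₗ[k] A →ₗ[k] A) (bf : A →ₗ[k] A →ₗ[k] k) : Prop :=
  IsRightNovikov d ∧ (∀ x y : A, bf x y = bf y x) ∧
  (∀ x : A, (∀ y : A, bf x y = 0) → x = 0) ∧
  (∀ x y z : A, bf (d x y) z = - bf x (d y z + d z y))

/-- A quadratic pre-Lie algebra: a pre-Lie algebra with a skew-symmetric nondegenerate
bilinear form satisfying `ω(u∘v,w) = −ω(v, u∘w − w∘u)`. -/
def IsQuadraticPreLie (op : A →ₗ[k] A →ₗ[k] A) (w : A →ₗ[k] A →ₗ[k] k) : Prop :=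
  IsPreLie op ∧ (∀ u v : A, w u v = - w v u) ∧
  (∀ u : A, (∀ v : A, w u v = 0) → u = 0) ∧
  (∀ u v x : A, w (op u v) x = - w v (op u x - op x u))

end AlgDefs
section CoDefs
variable {A : Type*} [AddCommGroup A] [Module k A]

/-- `(f ⊗ id)` on `A⊗A`, landing in `A⊗(A⊗A)` via the associator. -/
def lmap3 (f : A →ₗ[k] A ⊗[k] A) : A ⊗[k] A →ₗ[k] A ⊗[k] (A ⊗[k] A) :=
  (TensorProduct.assoc k A A A).toLinearMap ∘ₗ TensorProduct.map f LinearMap.id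

/-- `(id ⊗ f)` on `A⊗A`, landing in `A⊗(A⊗A)`. -/
def rmap3 (f : A →ₗ[k] A ⊗[k] A) : A ⊗[k] A →ₗ[k] A ⊗[k] (A ⊗[k] A) :=
  TensorProduct.map LinearMap.id f

/-- `τ ⊗ id` on the triple tensor product `A⊗(A⊗A)`: `a⊗(b⊗c) ↦ b⊗(a⊗c)`. -/
def swap12 : A ⊗[k] (A ⊗[k] A) →ₗ[k] A ⊗[k] (A ⊗[k] A) :=
  (TensorProduct.assoc k A A A).toLinearMap ∘ₗ
    TensorProduct.map (TensorProduct.comm k A A).toLinearMap LinearMap.id ∘ₗ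
    (TensorProduct.assoc k A A A).symm.toLinearMap

/-- `id ⊗ τ` on the triple tensor product `A⊗(A⊗A)`: `a⊗(b⊗c) ↦ a⊗(c⊗b)`. -/
def swap23 : A ⊗[k] (A ⊗[k] A) →ₗ[k] A ⊗[k] (A ⊗[k] A) :=
  TensorProduct.map LinearMap.id (TensorProduct.comm k A A).toLinearMap

/-- The flip `τ` on `A ⊗ A`. -/
def tau2 : A ⊗[k] A →ₗ[k] A ⊗[k] A := (TensorProduct.comm k A A).toLinearMap

/-- A pre-Novikov coalgebra `(A, α, β)`. -/
def IsPreNovikovCoalgebra (α β : A →ₗ[k] A ⊗[k] A) : Prop :=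
  (∀ a : A, lmap3 α (α a) + swap12 (rmap3 α (β a)) - rmap3 (α + β) (α a)
      - swap12 (lmap3 β (α a)) = 0) ∧
  (∀ a : A, rmap3 β (β a) + swap12 (lmap3 (α + β) (β a)) - lmap3 (α + β) (β a)
      - swap12 (rmap3 β (β a)) = 0) ∧
  (∀ a : A, swap23 (lmap3 β (α a)) - lmap3 (α + β) (β a) = 0) ∧
  (∀ a : A, swap23 (lmap3 α (α a)) - lmap3 α (α a) = 0)

/-- A right Novikov co-dialgebra `(B, Δα, Δβ)` (denoted `(A, Da, Db)` here). -/
def IsRightNovikovCoDialgebra (Da Db : A →ₗ[k] A ⊗[k] A) : Prop :=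
  (∀ x : A, rmap3 Db (Db x) = swap12 (rmap3 Db (Db x))) ∧
  (∀ x : A, rmap3 Da (Db x) = swap12 (rmap3 Da (Da x))) ∧
  (∀ x : A, lmap3 Db (Db x) = lmap3 Da (Db x)) ∧
  (∀ x : A, rmap3 Db (Da x) = rmap3 Da (Da x)) ∧
  (∀ x : A, rmap3 Db (Db x) - swap23 (rmap3 Da (Db x))
      = lmap3 Db (Db x) - swap23 (lmap3 Db (Da x))) ∧
  (∀ x : A, rmap3 Db (Da x) - swap23 (rmap3 Da (Da x))
      = lmap3 Da (Da x) - swap23 (lmap3 Da (Da x)))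

/-- A pre-Lie coalgebra `(L, δ)`. -/
def IsPreLieCoalgebra (δ : A →ₗ[k] A ⊗[k] A) : Prop :=
  ∀ a : A, rmap3 δ (δ a) - swap12 (rmap3 δ (δ a)) = lmap3 δ (δ a) - swap12 (lmap3 δ (δ a))

/-- A right Novikov coalgebra `(B, Δ)`. -/
def IsRightNovikovCoalgebra (Δ : A →ₗ[k] A ⊗[k] A) : Prop :=
  (∀ x : A, lmap3 Δ (Δ x) - swap23 (lmap3 Δ (Δ x))
      = rmap3 Δ (Δ x) - swap23 (rmap3 Δ (Δ x))) ∧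
  (∀ x : A, rmap3 Δ (Δ x) = swap12 (rmap3 Δ (Δ x)))

end CoDefs


section Aux
variable {A : Type*} [AddCommGroup A] [Module k A]

/-- Pairing of three dual functionals against `A ⊗ (A ⊗ A)`. -/
def P3 (f g h : Module.Dual k A) : A ⊗[k] (A ⊗[k] A) →ₗ[k] k :=
  (TensorProduct.lid k k).toLinearMap ∘ₗ
    TensorProduct.map f ((TensorProduct.lid k k).toLinearMap ∘ₗ TensorProduct.map g h)

@[simp] lemma P3_tmul (f g h : Module.Dual k A) (a b c : A) :
    P3 f g h (a ⊗ₜ[k] (b ⊗ₜ[k] c)) = f a * (g b * h c) := by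
  simp [P3, smul_eq_mul]

lemma P3_tmul_right (f g h : Module.Dual k A) (u : A) (w : A ⊗[k] A) :
    P3 f g h (u ⊗ₜ[k] w) = f u * TensorProduct.lid k k (TensorProduct.map g h w) := by
  simp [P3, smul_eq_mul]

lemma ext3 {M : Type*} [AddCommMonoid M] [Module k M]
    {F G : A ⊗[k] (A ⊗[k] A) →ₗ[k] M}
    (hFG : ∀ a b c : A, F (a ⊗ₜ[k] (b ⊗ₜ[k] c)) = G (a ⊗ₜ[k] (b ⊗ₜ[k] c))) : F = G := by
  apply TensorProduct.ext'
  intro a y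
  induction y using TensorProduct.induction_on with
  | zero => simp [tmul_zero]
  | tmul b c => exact hFG a b c
  | add y z hy hz => rw [tmul_add, map_add, map_add, hy, hz]

lemma P3_swap12 (f g h : Module.Dual k A) (x : A ⊗[k] (A ⊗[k] A)) :
    P3 f g h (swap12 x) = P3 g f h x := by
  have hm : (P3 f g h ∘ₗ (swap12 : A ⊗[k] (A ⊗[k] A) →ₗ[k] A ⊗[k] (A ⊗[k] A)))
      = P3 g f h := by
    apply ext3
    intro a b c
    have hs : (swap12 : A ⊗[k] (A ⊗[k] A) →ₗ[k] A ⊗[k] (A ⊗[k] A)) (a ⊗ₜ[k] (b ⊗ₜ[k] c))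
        = b ⊗ₜ[k] (a ⊗ₜ[k] c) := by
      simp [swap12]
    simp only [LinearMap.comp_apply, hs, P3_tmul]
    ring
  exact LinearMap.congr_fun hm x

lemma P3_swap23 (f g h : Module.Dual k A) (x : A ⊗[k] (A ⊗[k] A)) :
    P3 f g h (swap23 x) = P3 f h g x := by
  have hm : (P3 f g h ∘ₗ (swap23 : A ⊗[k] (A ⊗[k] A) →ₗ[k] A ⊗[k] (A ⊗[k] A)))
      = P3 f h g := by
    apply ext3
    intro a b c
    have hs : (swap23 : A ⊗[k] (A ⊗[k] A) →ₗ[k] A ⊗[k] (A ⊗[k] A)) (a ⊗ₜ[k] (b ⊗ₜ[k] c))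
        = a ⊗ₜ[k] (c ⊗ₜ[k] b) := by
      simp [swap23]
    simp only [LinearMap.comp_apply, hs, P3_tmul]
    ring
  exact LinearMap.congr_fun hm x

lemma P3_eq_zero (x : A ⊗[k] (A ⊗[k] A))
    (hx : ∀ f g h : Module.Dual k A, P3 f g h x = 0) : x = 0 := by
  let b := Module.Basis.ofVectorSpace k A
  let B := b.tensorProduct (b.tensorProduct b)
  have key : ∀ (i j l) (y : A ⊗[k] (A ⊗[k] A)),
      B.repr y (i, (j, l)) = P3 (b.coord i) (b.coord j) (b.coord l) y := by
    intro i j l y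
    induction y using TensorProduct.induction_on with
    | zero => simp
    | tmul u w =>
      induction w using TensorProduct.induction_on with
      | zero => simp [tmul_zero]
      | tmul v w' =>
        simp [B, Module.Basis.tensorProduct_repr_tmul_apply, Module.Basis.coord_apply]
        ring
      | add y z hy hz =>
        rw [tmul_add]
        simp only [map_add, Finsupp.add_apply, hy, hz]
    | add y z hy hz => simp only [map_add, Finsupp.add_apply, hy, hz]
  have hrep : B.repr x = 0 := by
    ext p
    obtain ⟨i, j, l⟩ := p
    rw [key]
    simpa using hx _ _ _
  simpa using (LinearEquiv.map_eq_zero_iff B.repr).mp hrep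

lemma eval_right (f g h F : Module.Dual k A) (D : A →ₗ[k] A ⊗[k] A)
    (hF : ∀ v, F v = TensorProduct.lid k k (TensorProduct.map g h (D v)))
    (x : A ⊗[k] A) :
    TensorProduct.lid k k (TensorProduct.map f F x) = P3 f g h (rmap3 D x) := by
  induction x using TensorProduct.induction_on with
  | zero => simp
  | tmul u v => simp [rmap3, P3_tmul_right, hF, smul_eq_mul]
  | add x y hx hy => simp only [map_add, hx, hy]

lemma P3_assoc (f g h : Module.Dual k A) (v : A) (w : A ⊗[k] A) :
    P3 f g h (TensorProduct.assoc k A A A (w ⊗ₜ[k] v))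
      = TensorProduct.lid k k (TensorProduct.map f g w) * h v := by
  induction w using TensorProduct.induction_on with
  | zero => simp
  | tmul p q =>
    simp [smul_eq_mul]
    ring
  | add x y hx hy =>
    simp only [add_tmul, map_add, hx, hy, LinearMap.add_apply]
    ring

lemma eval_left (f g h F : Module.Dual k A) (D : A →ₗ[k] A ⊗[k] A)
    (hF : ∀ v, F v = TensorProduct.lid k k (TensorProduct.map f g (D v)))
    (x : A ⊗[k] A) :
    TensorProduct.lid k k (TensorProduct.map F h x) = P3 f g h (lmap3 D x) := by
  induction x using TensorProduct.induction_on with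
  | zero => simp [lmap3]
  | tmul u v =>
    simp only [lmap3, LinearMap.comp_apply, TensorProduct.map_tmul, LinearMap.id_coe, id_eq,
      LinearEquiv.coe_coe, TensorProduct.lid_tmul, smul_eq_mul, P3_assoc, hF]
  | add x y hx hy => simp only [map_add, hx, hy]

end Aux

/-- For a finite-dimensional vector space `A` with linear maps
`α, β : A → A⊗A`, and the dual operations `⟨f◁'g, a⟩ = (f⊗g)(α(a))`,
`⟨f▷'g, a⟩ = (f⊗g)(β(a))` on `A*`, `(A, α, β)` is a pre-Novikov coalgebra if and
only if `(A*, ◁', ▷')` is a pre-Novikov algebra. -/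
theorem preNovikov_coalgebra_iff_dual_preNovikov (k A : Type*) [Field k] [CharZero k]
    [AddCommGroup A] [Module k A] [FiniteDimensional k A]
    (α β : A →ₗ[k] A ⊗[k] A)
    (l' r' : Module.Dual k A →ₗ[k] Module.Dual k A →ₗ[k] Module.Dual k A)
    (hl' : ∀ (f g : Module.Dual k A) (a : A),
      l' f g a = TensorProduct.lid k k (TensorProduct.map f g (α a)))
    (hr' : ∀ (f g : Module.Dual k A) (a : A),
      r' f g a = TensorProduct.lid k k (TensorProduct.map f g (β a))) :
    IsPreNovikovCoalgebra α β ↔ IsPreNovikov l' r' := by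
  have E1 : ∀ (f g h : Module.Dual k A) (a : A),
      r' f (r' g h) a = P3 f g h (rmap3 β (β a)) := by
    intro f g h a
    rw [hr', eval_right f g h (r' g h) β (fun v => hr' g h v)]
  have E2 : ∀ (f g h : Module.Dual k A) (a : A),
      r' (l' f g + r' f g) h a = P3 f g h (lmap3 (α + β) (β a)) := by
    intro f g h a
    have hF : ∀ v, (l' f g + r' f g) v
        = TensorProduct.lid k k (TensorProduct.map f g ((α + β) v)) := by
      intro v
      simp [hl', hr', map_add]
    rw [hr', eval_left f g h _ (α + β) hF]
  have E3 : ∀ (f g h : Module.Dual k A) (a : A),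
      r' f (l' g h) a = P3 f g h (rmap3 α (β a)) := by
    intro f g h a
    rw [hr', eval_right f g h (l' g h) α (fun v => hl' g h v)]
  have E4 : ∀ (f g h : Module.Dual k A) (a : A),
      l' (r' f g) h a = P3 f g h (lmap3 β (α a)) := by
    intro f g h a
    rw [hl', eval_left f g h (r' f g) β (fun v => hr' f g v)]
  have E5 : ∀ (f g h : Module.Dual k A) (a : A),
      l' f (l' g h + r' g h) a = P3 f g h (rmap3 (α + β) (α a)) := by
    intro f g h a
    have hF : ∀ v, (l' g h + r' g h) v
        = TensorProduct.lid k k (TensorProduct.map g h ((α + β) v)) := by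
      intro v
      simp [hl', hr', map_add]
    rw [hl', eval_right f g h _ (α + β) hF]
  have E6 : ∀ (f g h : Module.Dual k A) (a : A),
      l' (l' f g) h a = P3 f g h (lmap3 α (α a)) := by
    intro f g h a
    rw [hl', eval_left f g h (l' f g) α (fun v => hl' f g v)]
  constructor
  · rintro ⟨c1, c2, c3, c4⟩
    refine ⟨?_, ?_, ?_, ?_⟩
    · intro f g h
      apply LinearMap.ext; intro a
      have h0 := congrArg (P3 f g h) (c2 a)
      simp only [map_add, map_sub, map_zero, P3_swap12] at h0
      simp only [LinearMap.add_apply, LinearMap.sub_apply, E1, E2]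
      linear_combination h0
    · intro f g h
      apply LinearMap.ext; intro a
      have h0 := congrArg (P3 g f h) (c1 a)
      simp only [map_add, map_sub, map_zero, P3_swap12] at h0
      simp only [LinearMap.add_apply, LinearMap.sub_apply, E3, E4, E5, E6]
      linear_combination h0
    · intro f g h
      apply LinearMap.ext; intro a
      have h0 := congrArg (P3 f g h) (c3 a)
      simp only [map_sub, map_zero, P3_swap23] at h0
      rw [E2 f g h a, E4 f h g a]
      linear_combination -h0
    · intro f g h
      apply LinearMap.ext; intro a
      have h0 := congrArg (P3 f g h) (c4 a)
      simp only [map_sub, map_zero, P3_swap23] at h0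
      rw [E6 f g h a, E6 f h g a]
      linear_combination -h0
  · rintro ⟨a1, a2, a3, a4⟩
    refine ⟨?_, ?_, ?_, ?_⟩
    · intro x
      apply P3_eq_zero
      intro f g h
      have h1 := LinearMap.congr_fun (a2 g f h) x
      simp only [LinearMap.add_apply, LinearMap.sub_apply, E3, E4, E5, E6] at h1
      simp only [map_add, map_sub, P3_swap12, P3_swap23]
      linear_combination h1
    · intro x
      apply P3_eq_zero
      intro f g h
      have h1 := LinearMap.congr_fun (a1 f g h) x
      simp only [LinearMap.add_apply, LinearMap.sub_apply, E1, E2] at h1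
      simp only [map_add, map_sub, P3_swap12]
      linear_combination h1
    · intro x
      apply P3_eq_zero
      intro f g h
      have h1 := LinearMap.congr_fun (a3 f g h) x
      simp only [LinearMap.add_apply, LinearMap.sub_apply, E2, E4] at h1
      simp only [map_sub, P3_swap23]
      linear_combination -h1
    · intro x
      apply P3_eq_zero
      intro f g h
      have h1 := LinearMap.congr_fun (a4 f g h) x
      simp only [E6] at h1
      simp only [map_sub, P3_swap23]
      linear_combination -h1
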